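/- Let 0 < C_∞ < C_0 and τ ≥ 1. Then for every λ > 0, λ/(C_0 + λτ) - ln(λ/(C_0 + λτ)) > λ/(C_∞ + λτ) - ln(λ/(C_∞ + λτ)). That is, with τ ≥ 1 the fully under-parameterized limiting BFE is always below the fully over-parameterized one, so weak descent never occurs. -/
import Mathlib

/-- For `0 < C_∞ < C_0` and `τ ≥ 1`, for every `λ > 0` the over-parameterized
limiting BFE term exceeds the under-parameterized one:
`λ/(C₀ + λτ) - log (λ/(C₀ + λτ)) > λ/(C∞ + λτ) - log (λ/(C∞ + λτ))`,
so weak descent never occurs. -/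
theorem no_weak_descent_large_tau (C0 Cinf τ : ℝ) (hCinf : 0 < Cinf)
    (hlt : Cinf < C0) (hτ : 1 ≤ τ) :
    ∀ l : ℝ, 0 < l →
      l / (Cinf + l * τ) - Real.log (l / (Cinf + l * τ)) <
        l / (C0 + l * τ) - Real.log (l / (C0 + l * τ)) := by
  intro l hl
  have hτ0 : 0 < τ := lt_of_lt_of_le one_pos hτ
  have hd0 : 0 < C0 + l * τ := by nlinarith
  have hdi : 0 < Cinf + l * τ := by positivity
  set a := l / (C0 + l * τ) with ha
  set b := l / (Cinf + l * τ) with hb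
  have ha0 : 0 < a := div_pos hl hd0
  have hb0 : 0 < b := div_pos hl hdi
  have hab : a < b := by
    apply div_lt_div_of_pos_left hl hdi
    linarith
  have hb1 : b < 1 := by
    rw [hb, div_lt_one hdi]
    nlinarith
  -- log a - log b < (a - b)/b < a - b
  have hkey : Real.log (a / b) < a / b - 1 := by
    apply Real.log_lt_sub_one_of_pos (by positivity)
    intro h
    have : a = b := by field_simp at h; linarith
    linarith
  rw [Real.log_div (ne_of_gt ha0) (ne_of_gt hb0)] at hkey
  have h2 : a / b - 1 = (a - b) / b := by field_simp
  have h3 : (a - b) / b < a - b := by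
    rw [div_lt_iff₀ hb0]
    nlinarith
  linarith
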